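/- Let m be a positive integer and let μ be the Haar probability measure on the real orthogonal group O(m). Then for every pair of indices i, j, the fourth moment of the (i,j) entry of a Haar-distributed orthogonal matrix equals 3/(m(m+2)): ∫_{O(m)} (Q i j)^4 dμ(Q) = 3/(m(m+2)). -/

import Mathlib

open MeasureTheory Matrix

section AuxO4

variable {m : ℕ}

lemma perm_orth' (σ : Equiv.Perm (Fin m)) :
    (σ.permMatrix ℝ)ᵀ * σ.permMatrix ℝ = 1 := by
  rw [← PEquiv.toMatrix_symm, ← Equiv.toPEquiv_symm, ← PEquiv.toMatrix_trans,
      ← Equiv.toPEquiv_trans]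
  simp

lemma stdBasis_transpose' (a b : Fin m) :
    (single a b (1:ℝ))ᵀ = single b a 1 := by
  ext x y
  simp only [transpose_apply, single, of_apply]
  by_cases h1 : a = y <;> by_cases h2 : b = x <;> simp [h1, h2, and_comm]

lemma rot_orth' (i k : Fin m) (hik : i ≠ k) (c s : ℝ) (hcs : c ^ 2 + s ^ 2 = 1) :
    (1 - (single i i (1:ℝ) + single k k 1)
      + c • (single i i 1 + single k k 1)
      + s • (single k i 1 - single i k 1))ᵀ *
    (1 - (single i i (1:ℝ) + single k k 1)
      + c • (single i i 1 + single k k 1)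
      + s • (single k i 1 - single i k 1)) = 1 := by
  have mne : ∀ (a b a' b' : Fin m), b ≠ a' →
      single a b (1:ℝ) * single a' b' 1 = 0 :=
    fun a b a' b' h => Matrix.single_mul_single_of_ne (c := 1) a b a' h 1
  have msame : ∀ (a b b' : Fin m),
      single a b (1:ℝ) * single b b' 1 = single a b' 1 := by
    intro a b b'
    rw [Matrix.single_mul_single_same, one_mul]
  set D : Matrix (Fin m) (Fin m) ℝ := single i i 1 + single k k 1 with hD
  set E : Matrix (Fin m) (Fin m) ℝ := single k i 1 - single i k 1 with hE
  have hDD : D * D = D := by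
    rw [hD, add_mul, mul_add, mul_add, msame, msame, mne _ _ _ _ hik, mne _ _ _ _ hik.symm]
    abel
  have hDE : D * E = E := by
    rw [hD, hE, add_mul, mul_sub, mul_sub, msame, msame,
      mne _ _ _ _ hik, mne _ _ _ _ hik.symm]
    abel
  have hED : E * D = E := by
    rw [hD, hE, sub_mul, mul_add, mul_add, msame, msame,
      mne _ _ _ _ hik, mne _ _ _ _ hik.symm]
    abel
  have hEE : E * E = -D := by
    rw [hD, hE, sub_mul, mul_sub, mul_sub, msame, msame,
      mne _ _ _ _ hik, mne _ _ _ _ hik.symm]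
    abel
  have hDt : Dᵀ = D := by
    rw [hD, transpose_add, stdBasis_transpose', stdBasis_transpose']
  have hEt : Eᵀ = -E := by
    rw [hE, transpose_sub, stdBasis_transpose', stdBasis_transpose']
    abel
  have htr : (1 - D + c • D + s • E)ᵀ = 1 - D + c • D + (-s) • E := by
    rw [transpose_add, transpose_add, transpose_sub, transpose_smul, transpose_smul,
      transpose_one, hDt, hEt, smul_neg, neg_smul]
  rw [htr]
  have expand : (1 - D + c • D + (-s) • E) * (1 - D + c • D + s • E)
      = 1 - D + c ^ 2 • D + s ^ 2 • D := by
    simp only [Matrix.add_mul, Matrix.sub_mul, Matrix.mul_add, Matrix.mul_sub,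
      Matrix.smul_mul, Matrix.mul_smul, Matrix.one_mul, Matrix.mul_one, hDD, hDE, hED, hEE,
      smul_smul, smul_neg, neg_smul, neg_neg, neg_mul, mul_neg, Matrix.neg_mul, Matrix.mul_neg]
    module
  rw [expand, add_assoc, ← add_smul, hcs, one_smul]
  abel

end AuxO4

/-- For the Haar probability measure `μ` on the real orthogonal
group `O(m)`, the fourth moment of the `(i,j)` entry equals `3/(m(m+2))`. -/
theorem haar_orthogonal_fourth_moment (m : ℕ) (hm : 0 < m)
    (μ : Measure (Fin m → Fin m → ℝ)) [IsProbabilityMeasure μ]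
    (hsupp : μ {Q | (Matrix.of Q)ᵀ * Matrix.of Q = 1} = 1)
    (hinv : ∀ P : Matrix (Fin m) (Fin m) ℝ, Pᵀ * P = 1 →
      μ.map (fun Q => Matrix.of.symm (P * Matrix.of Q)) = μ)
    (i j : Fin m) :
    ∫ Q, (Q i j) ^ 4 ∂μ = 3 / ((m : ℝ) * ((m : ℝ) + 2)) := by
  classical
  have hmR : (0:ℝ) < (m:ℝ) := by exact_mod_cast hm
  have hent : ∀ a b : Fin m, Measurable (fun Q : Fin m → Fin m → ℝ => Q a b) :=
    fun a b => (measurable_pi_apply b).comp (measurable_pi_apply a)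
  -- the support set is measurable
  have hSm : MeasurableSet {Q : Fin m → Fin m → ℝ | (Matrix.of Q)ᵀ * Matrix.of Q = 1} := by
    have hset : {Q : Fin m → Fin m → ℝ | (Matrix.of Q)ᵀ * Matrix.of Q = 1}
        = ⋂ (a : Fin m) (b : Fin m),
          {Q : Fin m → Fin m → ℝ | (∑ l, Q l a * Q l b) = if a = b then (1:ℝ) else 0} := by
      ext Q
      simp only [Set.mem_iInter, Set.mem_setOf_eq]
      constructor
      · intro h a b
        have h1 : ((Matrix.of Q)ᵀ * Matrix.of Q) a b = (1 : Matrix (Fin m) (Fin m) ℝ) a b := by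
          rw [h]
        simpa [Matrix.mul_apply, Matrix.one_apply] using h1
      · intro h
        ext a b
        have := h a b
        simpa [Matrix.mul_apply, Matrix.one_apply] using this
    rw [hset]
    refine MeasurableSet.iInter fun a => MeasurableSet.iInter fun b => ?_
    exact measurableSet_eq_fun
      (Finset.measurable_sum _ fun l _ => (hent l a).mul (hent l b)) measurable_const
  -- almost every `Q` is orthogonal
  have hae : ∀ᵐ Q ∂μ, Q ∈ {Q : Fin m → Fin m → ℝ | (Matrix.of Q)ᵀ * Matrix.of Q = 1} := by
    rw [ae_iff]
    have h0 := measure_compl hSm (measure_ne_top μ _)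
    rw [hsupp, measure_univ, tsub_self] at h0
    simpa [Set.compl_setOf] using h0
  -- column `j` is a unit vector a.e.
  have hcol : ∀ᵐ Q ∂μ, (∑ l, (Q l j)^2) = 1 := by
    refine hae.mono fun Q hQ => ?_
    have h1 : ((Matrix.of Q)ᵀ * Matrix.of Q) j j = (1 : Matrix (Fin m) (Fin m) ℝ) j j := by
      rw [hQ]
    simpa [Matrix.mul_apply, Matrix.one_apply, pow_two] using h1
  have hbd : ∀ᵐ Q ∂μ, ∀ l, (Q l j)^2 ≤ 1 := by
    refine hcol.mono fun Q hQ l => ?_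
    have h1 : (Q l j)^2 ≤ ∑ l', (Q l' j)^2 :=
      Finset.single_le_sum (f := fun l' => (Q l' j)^2) (fun l' _ => sq_nonneg _)
        (Finset.mem_univ l)
    rwa [hQ] at h1
  have habs : ∀ᵐ Q ∂μ, ∀ l, |Q l j| ≤ 1 :=
    hbd.mono fun Q hQ l => (sq_le_one_iff_abs_le_one _).1 (hQ l)
  -- integrability of a.e.-bounded measurable functions
  have intba : ∀ (f : (Fin m → Fin m → ℝ) → ℝ) (C : ℝ), Measurable f →
      (∀ᵐ Q ∂μ, |f Q| ≤ C) → Integrable f μ := by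
    intro f C hf hb
    refine ⟨hf.aestronglyMeasurable, MeasureTheory.HasFiniteIntegral.of_bounded (C := C) ?_⟩
    simpa [Real.norm_eq_abs] using hb
  have int4 : ∀ l, Integrable (fun Q : Fin m → Fin m → ℝ => (Q l j)^4) μ := by
    intro l
    refine intba _ 1 ((hent l j).pow_const 4) (habs.mono fun Q hQ => ?_)
    rw [abs_pow]
    calc |Q l j| ^ 4 ≤ 1 ^ 4 := pow_le_pow_left₀ (abs_nonneg _) (hQ l) 4
    _ = 1 := one_pow 4
  have int22 : ∀ l l', Integrable (fun Q : Fin m → Fin m → ℝ => (Q l j)^2 * (Q l' j)^2) μ := by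
    intro l l'
    refine intba _ 1 (((hent l j).pow_const 2).mul ((hent l' j).pow_const 2))
      (hbd.mono fun Q hQ => ?_)
    rw [abs_mul, abs_of_nonneg (sq_nonneg _), abs_of_nonneg (sq_nonneg _)]
    calc (Q l j)^2 * (Q l' j)^2 ≤ 1 * 1 :=
          mul_le_mul (hQ l) (hQ l') (sq_nonneg _) zero_le_one
    _ = 1 := one_mul 1
  -- invariance of integrals under left multiplication by orthogonal matrices
  have key : ∀ (P : Matrix (Fin m) (Fin m) ℝ), Pᵀ * P = 1 →
      ∀ (f : (Fin m → Fin m → ℝ) → ℝ), Measurable f →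
      ∫ Q, f Q ∂μ = ∫ Q, f (Matrix.of.symm (P * Matrix.of Q)) ∂μ := by
    intro P hP f hf
    have hg : Measurable (fun Q : Fin m → Fin m → ℝ => Matrix.of.symm (P * Matrix.of Q)) := by
      refine measurable_pi_lambda _ fun a => measurable_pi_lambda _ fun b => ?_
      have hfun : (fun Q : Fin m → Fin m → ℝ => Matrix.of.symm (P * Matrix.of Q) a b)
          = fun Q : Fin m → Fin m → ℝ => ∑ l, P a l * Q l b := by
        funext Q
        simp [Matrix.mul_apply]
      rw [hfun]
      exact Finset.measurable_sum _ fun l _ => measurable_const.mul (hent l b)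
    conv_lhs => rw [← hinv P hP]
    rw [integral_map hg.aemeasurable hf.aestronglyMeasurable]
  -- invariance under row permutations
  have permKey : ∀ (σ : Equiv.Perm (Fin m)) (f : (Fin m → Fin m → ℝ) → ℝ), Measurable f →
      ∫ Q, f Q ∂μ = ∫ Q, f (fun a b => Q (σ a) b) ∂μ := by
    intro σ f hf
    have h := key (σ.permMatrix ℝ) (perm_orth' σ) f hf
    have hfun : ∀ Q : Fin m → Fin m → ℝ,
        (Matrix.of.symm (σ.permMatrix ℝ * Matrix.of Q)) = fun a b => Q (σ a) b := by
      intro Q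
      funext a b
      show (σ.permMatrix ℝ * Matrix.of Q) a b = Q (σ a) b
      rw [PEquiv.toMatrix_toPEquiv_mul]
      rfl
    simp only [hfun] at h
    exact h
  rcases lt_or_ge 1 m with hm2 | hm1
  · -- the case `2 ≤ m`
    obtain ⟨k, hk⟩ := Fintype.exists_ne_of_one_lt_card (by simpa using hm2) i
    set T := ∫ Q, (Q i j)^4 ∂μ with hT
    set S2 := ∫ Q, (Q i j)^2 * (Q k j)^2 ∂μ with hS2
    -- all fourth moments in column j agree
    have claim1 : ∀ l, ∫ Q, (Q l j)^4 ∂μ = T := by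
      intro l
      have h := permKey (Equiv.swap i l) (fun Q => (Q i j)^4) ((hent i j).pow_const 4)
      simp only [Equiv.swap_apply_left] at h
      rw [hT]
      exact h.symm
    -- all mixed moments in column j agree
    have claim2 : ∀ l l', l ≠ l' → ∫ Q, (Q l j)^2 * (Q l' j)^2 ∂μ = S2 := by
      intro l l' hll
      set τ := Equiv.swap i l with hτ
      set σ := τ.trans (Equiv.swap (τ k) l') with hσ
      have h1 : τ i = l := Equiv.swap_apply_left i l
      have h2 : τ k ≠ l := by
        intro hcon
        exact hk (τ.injective (hcon.trans h1.symm))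
      have hσi : σ i = l := by
        rw [hσ]
        simp only [Equiv.trans_apply]
        rw [h1, Equiv.swap_apply_of_ne_of_ne h2.symm hll]
      have hσk : σ k = l' := by
        rw [hσ]
        simp only [Equiv.trans_apply]
        exact Equiv.swap_apply_left _ _
      have h := permKey σ (fun Q => (Q i j)^2 * (Q k j)^2)
        (((hent i j).pow_const 2).mul ((hent k j).pow_const 2))
      simp only [hσi, hσk] at h
      rw [hS2]
      exact h.symm
    -- the normalization identity
    have hsum1 : ∫ Q, (∑ l, (Q l j)^2) * (∑ l', (Q l' j)^2) ∂μ = 1 := by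
      have hone : ∀ᵐ Q ∂μ, (∑ l, (Q l j)^2) * (∑ l', (Q l' j)^2) = 1 :=
        hcol.mono fun Q hQ => by rw [hQ, one_mul]
      rw [integral_congr_ae hone, integral_const, probReal_univ]
      simp
    have hexp : ∫ Q, (∑ l, (Q l j)^2) * (∑ l', (Q l' j)^2) ∂μ
        = ∑ l, ∑ l', ∫ Q, (Q l j)^2 * (Q l' j)^2 ∂μ := by
      have hfun : ∀ Q : Fin m → Fin m → ℝ, (∑ l, (Q l j)^2) * (∑ l', (Q l' j)^2)
          = ∑ l, ∑ l', (Q l j)^2 * (Q l' j)^2 := fun Q => by rw [Finset.sum_mul_sum]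
      simp only [hfun]
      rw [integral_finset_sum _ (fun l _ => integrable_finset_sum _ (fun l' _ => int22 l l'))]
      exact Finset.sum_congr rfl fun l _ => integral_finset_sum _ (fun l' _ => int22 l l')
    have hsum2 : (m:ℝ) * (T + ((m:ℝ) - 1) * S2) = 1 := by
      have hrow : ∀ l : Fin m, (∑ l', ∫ Q, (Q l j)^2 * (Q l' j)^2 ∂μ)
          = T + ((m:ℝ) - 1) * S2 := by
        intro l
        rw [← Finset.add_sum_erase _ _ (Finset.mem_univ l)]
        congr 1
        · have hsq : (fun Q : Fin m → Fin m → ℝ => (Q l j)^2 * (Q l j)^2)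
              = fun Q : Fin m → Fin m → ℝ => (Q l j)^4 := by
            funext Q; ring
          rw [hsq, claim1 l]
        · rw [Finset.sum_congr rfl (fun l' hl' =>
            claim2 l l' (Ne.symm (Finset.mem_erase.1 hl').1))]
          rw [Finset.sum_const, Finset.card_erase_of_mem (Finset.mem_univ l),
            Finset.card_univ, Fintype.card_fin, nsmul_eq_mul, Nat.cast_sub hm, Nat.cast_one]
      calc (m:ℝ) * (T + ((m:ℝ) - 1) * S2)
          = ∑ _l : Fin m, (T + ((m:ℝ) - 1) * S2) := by
            rw [Finset.sum_const, Finset.card_univ, Fintype.card_fin, nsmul_eq_mul]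
        _ = ∑ l, ∑ l', ∫ Q, (Q l j)^2 * (Q l' j)^2 ∂μ :=
            Finset.sum_congr rfl fun l _ => (hrow l).symm
        _ = 1 := by rw [← hexp, hsum1]
    -- the rotation identity
    set c : ℝ := (Real.sqrt 2)⁻¹ with hcdef
    have hc2 : c^2 = 1/2 := by
      rw [hcdef, inv_pow, Real.sq_sqrt (by norm_num : (0:ℝ) ≤ 2)]
      norm_num
    have hcabs : |c| ≤ 1 := by
      rw [abs_of_nonneg (by positivity)]
      rw [hcdef]
      have h1 : (1:ℝ) ≤ Real.sqrt 2 := by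
        rw [show (1:ℝ) = Real.sqrt 1 from (Real.sqrt_one).symm]
        exact Real.sqrt_le_sqrt (by norm_num)
      exact inv_le_one_of_one_le₀ h1
    have rotKey : ∀ s : ℝ, c^2 + s^2 = 1 →
        T = ∫ Q, (c * Q i j - s * Q k j)^4 ∂μ := by
      intro s hcs
      have horth := rot_orth' i k (Ne.symm hk) c s hcs
      have h := key _ horth (fun Q => (Q i j)^4) ((hent i j).pow_const 4)
      rw [hT, h]
      refine integral_congr_ae (ae_of_all _ fun Q => ?_)
      have hentry : (Matrix.of.symm ((1 - (single i i (1:ℝ) + single k k 1)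
          + c • (single i i 1 + single k k 1)
          + s • (single k i 1 - single i k 1)) * Matrix.of Q)) i j
          = c * Q i j - s * Q k j := by
        rw [Matrix.of_symm_apply]
        have hik : i ≠ k := Ne.symm hk
        simp only [Matrix.sub_mul, Matrix.add_mul, Matrix.smul_mul, Matrix.one_mul]
        simp [Matrix.sub_apply, Matrix.add_apply, Matrix.smul_apply, hik, smul_eq_mul]
        ring
      simp only [hentry]
    have hrot1 : T = ∫ Q, (c * Q i j - c * Q k j)^4 ∂μ :=
      rotKey c (by rw [hc2]; norm_num)
    have hrot2 : T = ∫ Q, (c * Q i j + c * Q k j)^4 ∂μ := by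
      have h := rotKey (-c) (by rw [neg_pow, hc2]; norm_num)
      simpa [sub_neg_eq_add, neg_mul] using h
    -- integrability of the rotated fourth powers
    have introt : ∀ s : ℝ, |s| ≤ 1 →
        Integrable (fun Q : Fin m → Fin m → ℝ => (c * Q i j + s * Q k j)^4) μ := by
      intro s hs
      refine intba _ 16
        (((measurable_const.mul (hent i j)).add (measurable_const.mul (hent k j))).pow_const 4)
        (habs.mono fun Q hQ => ?_)
      rw [abs_pow]
      have hb : |c * Q i j + s * Q k j| ≤ 2 := by
        calc |c * Q i j + s * Q k j| ≤ |c * Q i j| + |s * Q k j| := abs_add_le _ _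
        _ = |c| * |Q i j| + |s| * |Q k j| := by rw [abs_mul, abs_mul]
        _ ≤ 1 * 1 + 1 * 1 :=
            add_le_add (mul_le_mul hcabs (hQ i) (abs_nonneg _) zero_le_one)
              (mul_le_mul hs (hQ k) (abs_nonneg _) zero_le_one)
        _ = 2 := by norm_num
      calc |c * Q i j + s * Q k j| ^ 4 ≤ 2 ^ 4 := pow_le_pow_left₀ (abs_nonneg _) hb 4
      _ = 16 := by norm_num
    have introt1 : Integrable (fun Q : Fin m → Fin m → ℝ => (c * Q i j - c * Q k j)^4) μ := by
      have h := introt (-c) (by rwa [abs_neg])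
      simpa [neg_mul, sub_eq_add_neg] using h
    have introt2 : Integrable (fun Q : Fin m → Fin m → ℝ => (c * Q i j + c * Q k j)^4) μ :=
      introt c hcabs
    -- combine the two rotations
    have hco : ∀ Q : Fin m → Fin m → ℝ,
        (c * Q i j - c * Q k j)^4 + (c * Q i j + c * Q k j)^4
        = (1/2) * (Q i j)^4 + (3 * ((Q i j)^2 * (Q k j)^2) + (1/2) * (Q k j)^4) := by
      intro Q
      have h4 : c^4 = 1/4 := by
        have : c^4 = (c^2)^2 := by ring
        rw [this, hc2]; norm_num
      linear_combination (2*(Q i j)^4 + 12*(Q i j)^2*(Q k j)^2 + 2*(Q k j)^4) * h4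
    have h2T : 2 * T = (1/2) * T + (3 * S2 + (1/2) * T) := by
      have lhs_eq : ∫ Q, ((c * Q i j - c * Q k j)^4 + (c * Q i j + c * Q k j)^4) ∂μ
          = 2 * T := by
        rw [integral_add introt1 introt2, ← hrot1, ← hrot2]
        ring
      have rhs_eq : ∫ Q, ((c * Q i j - c * Q k j)^4 + (c * Q i j + c * Q k j)^4) ∂μ
          = (1/2) * T + (3 * S2 + (1/2) * T) := by
        have hfun : (fun Q : Fin m → Fin m → ℝ =>
            (c * Q i j - c * Q k j)^4 + (c * Q i j + c * Q k j)^4)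
            = fun Q : Fin m → Fin m → ℝ =>
              (1/2) * (Q i j)^4 + (3 * ((Q i j)^2 * (Q k j)^2) + (1/2) * (Q k j)^4) := by
          funext Q; exact hco Q
        rw [hfun]
        have ia : Integrable (fun Q : Fin m → Fin m → ℝ => (1/2) * (Q i j)^4) μ :=
          (int4 i).const_mul _
        have ic : Integrable
            (fun Q : Fin m → Fin m → ℝ => 3 * ((Q i j)^2 * (Q k j)^2)) μ :=
          (int22 i k).const_mul _
        have id' : Integrable (fun Q : Fin m → Fin m → ℝ => (1/2) * (Q k j)^4) μ :=
          (int4 k).const_mul _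
        have ib : Integrable (fun Q : Fin m → Fin m → ℝ =>
            3 * ((Q i j)^2 * (Q k j)^2) + (1/2) * (Q k j)^4) μ := ic.add id'
        rw [integral_add ia ib, integral_add ic id']
        rw [integral_const_mul, integral_const_mul, integral_const_mul, claim1 k]
      rw [← lhs_eq, rhs_eq]
    have hTS : T = 3 * S2 := by linarith
    -- final computation
    have hne1 : (m:ℝ) ≠ 0 := ne_of_gt hmR
    have hne2 : (m:ℝ) + 2 ≠ 0 := by positivity
    rw [hTS] at hsum2
    have h1 : (m:ℝ) * ((m:ℝ) + 2) * S2 = 1 := by linear_combination hsum2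
    rw [hTS, eq_div_iff (mul_ne_zero hne1 hne2)]
    linear_combination 3 * h1
  · -- the case `m = 1`
    have hmeq : m = 1 := le_antisymm hm1 hm
    subst hmeq
    have hae4 : ∀ᵐ Q ∂μ, (Q i j)^4 = 1 := by
      refine hcol.mono fun Q hQ => ?_
      rw [Fin.sum_univ_one] at hQ
      have hi : i = 0 := Subsingleton.elim i 0
      have h2 : (Q i j)^2 = 1 := by rw [hi]; exact hQ
      have h4 : (Q i j)^4 = ((Q i j)^2)^2 := by ring
      rw [h4, h2, one_pow]
    rw [integral_congr_ae hae4, integral_const, probReal_univ]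
    norm_num
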